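/- Let ψ₀, ψ₁ be an orthonormal basis of ℂⁿ, let σ = p|ψ₀⟩⟨ψ₀| + (1−p)|ψ₁⟩⟨ψ₁| + τ where τ is any operator commuting with |ψ₀⟩⟨ψ₀| (in the qubit case τ = 0), let H be an n×n Hermitian matrix and V an n×n unitary. For t ∈ ℝ define V(t) = V e^{i|ψ₀⟩⟨ψ₀| t}. Then: (i) Tr[V(t)† H V(t) σ] = Tr[V† H V σ] for all t, so the extracted work Tr[(H − V(t)†HV(t))σ] is independent of t; and (ii) ⟨ψ₁| V(t)† H V(t) |ψ₀⟩ = e^{it} ⟨ψ₁| V† H V |ψ₀⟩, so the phase of the off-diagonal matrix element of the rotated Hamiltonian can be tuned to any value while keeping the extracted work fixed. -/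

import Mathlib

open Matrix NormedSpace

lemma vmv_mulVec {n : ℕ} (a b w : Fin n → ℂ) :
    vecMulVec a b *ᵥ w = (b ⬝ᵥ w) • a := by
  ext i
  simp [vecMulVec_apply, mulVec, dotProduct, Finset.mul_sum, Finset.sum_mul, mul_comm, mul_assoc, mul_left_comm]

lemma vmv_mul_vmv {n : ℕ} (a b c d : Fin n → ℂ) :
    vecMulVec a b * vecMulVec c d = (b ⬝ᵥ c) • vecMulVec a d := by
  ext i j
  simp only [vecMulVec_apply, Matrix.mul_apply, dotProduct, Matrix.smul_apply, smul_eq_mul,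
    Finset.mul_sum]
  rw [Finset.sum_mul]
  apply Finset.sum_congr rfl
  intros; ring

lemma exp_idem {n : ℕ} (P : Matrix (Fin n) (Fin n) ℂ) (hP : P * P = P) (c : ℂ) :
    NormedSpace.exp (c • P) = 1 + (Complex.exp c - 1) • P := by
  have hpow : ∀ k : ℕ, 1 ≤ k → (c • P) ^ k = (c ^ k) • P := by
    intro k hk
    induction k with
    | zero => omega
    | succ m ih =>
      rcases Nat.eq_or_lt_of_le hk with h | h
      · simp [← h]
      · have hm : 1 ≤ m := by omega
        rw [pow_succ, ih hm, smul_mul_smul_comm, hP, ← pow_succ]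
  have h1 : (fun k : ℕ => ((k.factorial : ℂ))⁻¹ • (c • P) ^ k)
      = fun k : ℕ => (if k = 0 then (1 - P : Matrix (Fin n) (Fin n) ℂ) else 0)
        + (((k.factorial : ℂ))⁻¹ * c ^ k) • P := by
    funext k
    rcases Nat.eq_zero_or_pos k with h | h
    · subst h; simp
    · rw [hpow k h, if_neg (by omega), zero_add, smul_smul]
  have hs1 : Summable (fun k : ℕ => ((k.factorial : ℂ))⁻¹ * c ^ k) := by
    simpa [smul_eq_mul] using NormedSpace.expSeries_summable' (𝕂 := ℂ) c
  have hs2 : Summable (fun k : ℕ => (((k.factorial : ℂ))⁻¹ * c ^ k) • P) := hs1.smul_const P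
  have hs3 : Summable (fun k : ℕ => (if k = 0 then (1 - P : Matrix (Fin n) (Fin n) ℂ) else 0)) := by
    apply summable_of_finite_support
    apply Set.Finite.subset (Set.finite_singleton 0)
    intro k hk
    simp only [Function.mem_support, ne_eq, ite_eq_right_iff, not_forall] at hk
    simpa using hk.1
  have hexpc : ∑' k : ℕ, ((k.factorial : ℂ))⁻¹ * c ^ k = Complex.exp c := by
    rw [Complex.exp_eq_exp_ℂ, NormedSpace.exp_eq_tsum ℂ]
    simp [smul_eq_mul]
  calc NormedSpace.exp (c • P) = ∑' k : ℕ, ((k.factorial : ℂ))⁻¹ • (c • P) ^ k := by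
        rw [NormedSpace.exp_eq_tsum ℂ]
    _ = (∑' k : ℕ, (if k = 0 then (1 - P : Matrix (Fin n) (Fin n) ℂ) else 0))
        + ∑' k : ℕ, (((k.factorial : ℂ))⁻¹ * c ^ k) • P := by
        rw [h1]; exact hs3.tsum_add hs2
    _ = (1 - P) + (Complex.exp c) • P := by
        rw [hs1.tsum_smul_const, hexpc, tsum_eq_single 0 (by intro b hb; simp [hb])]
        simp
    _ = 1 + (Complex.exp c - 1) • P := by
        rw [sub_smul, one_smul]; abel


/-- Phase-tuning unitaries. With `P = |ψ₀⟩⟨ψ₀|`, `V(t) = V e^{iPt}`, and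
`σ = p|ψ₀⟩⟨ψ₀| + (1-p)|ψ₁⟩⟨ψ₁| + τ` where `τ` commutes with `P`:
(i) `Tr[V(t)†HV(t) σ] = Tr[V†HV σ]` for all `t`, and
(ii) `⟨ψ₁|V(t)†HV(t)|ψ₀⟩ = e^{it} ⟨ψ₁|V†HV|ψ₀⟩`. -/
theorem stmt_13 (n : ℕ) (ψ : Fin 2 → Fin n → ℂ)
    (horth : ∀ i j, star (ψ i) ⬝ᵥ ψ j = if i = j then (1 : ℂ) else 0)
    (p : ℝ) (τ : Matrix (Fin n) (Fin n) ℂ)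
    (hτ : Commute τ (vecMulVec (ψ 0) (star (ψ 0))))
    (σ : Matrix (Fin n) (Fin n) ℂ)
    (hσ : σ = (p : ℂ) • vecMulVec (ψ 0) (star (ψ 0))
        + ((1 - p : ℝ) : ℂ) • vecMulVec (ψ 1) (star (ψ 1)) + τ)
    (H V : Matrix (Fin n) (Fin n) ℂ)
    (hH : H.IsHermitian) (hV : V ∈ Matrix.unitaryGroup (Fin n) ℂ) (t : ℝ) :
    let P : Matrix (Fin n) (Fin n) ℂ := vecMulVec (ψ 0) (star (ψ 0))
    let Vt : Matrix (Fin n) (Fin n) ℂ := V * NormedSpace.exp ((Complex.I * t) • P)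
    ((Vtᴴ * H * Vt * σ).trace = (Vᴴ * H * V * σ).trace)
    ∧ (star (ψ 1) ⬝ᵥ ((Vtᴴ * H * Vt) *ᵥ ψ 0)
        = Complex.exp (Complex.I * t) * (star (ψ 1) ⬝ᵥ ((Vᴴ * H * V) *ᵥ ψ 0))) := by
  intro P Vt
  set z : ℂ := Complex.exp (Complex.I * t) with hzdef
  -- basic facts
  have h00 : star (ψ 0) ⬝ᵥ ψ 0 = 1 := by simpa using horth 0 0
  have h10 : star (ψ 1) ⬝ᵥ ψ 0 = 0 := by simpa using horth 1 0
  have h01 : star (ψ 0) ⬝ᵥ ψ 1 = 0 := by simpa using horth 0 1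
  have hP : P * P = P := by
    show vecMulVec (ψ 0) (star (ψ 0)) * vecMulVec (ψ 0) (star (ψ 0)) = _
    rw [vmv_mul_vmv, h00, one_smul]
  have hPH : Pᴴ = P := by
    ext i j
    simp [P, vecMulVec_apply, conjTranspose_apply, mul_comm]
  have hE : NormedSpace.exp ((Complex.I * t) • P) = 1 + (z - 1) • P :=
    exp_idem P hP _
  set E : Matrix (Fin n) (Fin n) ℂ := 1 + (z - 1) • P with hEdef
  have hVt : Vt = V * E := by rw [← hE]
  have hEH : Eᴴ = 1 + ((starRingEnd ℂ) (z - 1)) • P := by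
    rw [hEdef]
    simp only [conjTranspose_add, conjTranspose_smul, conjTranspose_one, hPH]
    norm_num
  have hzz : z * (starRingEnd ℂ) z = 1 := by
    rw [hzdef, ← Complex.exp_conj, ← Complex.exp_add]
    have hc : (starRingEnd ℂ) (Complex.I * t) = -(Complex.I * t) := by
      simp [Complex.conj_ofReal]
    rw [hc, add_neg_cancel, Complex.exp_zero]
  have hEEH : E * Eᴴ = 1 := by
    have hc : (starRingEnd ℂ) (z - 1) + (z - 1) + (z - 1) * (starRingEnd ℂ) (z - 1) = 0 := by
      have h2 : (starRingEnd ℂ) (z - 1) = (starRingEnd ℂ) z - 1 := by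
        simp [map_sub]
      rw [h2]; linear_combination hzz
    have expand : (1 + (z - 1) • P) * (1 + ((starRingEnd ℂ) (z - 1)) • P)
        = 1 + ((starRingEnd ℂ) (z - 1) + (z - 1) + (z - 1) * (starRingEnd ℂ) (z - 1)) • P := by
      rw [mul_add, mul_one, add_mul, one_mul, smul_mul_assoc, mul_smul_comm, hP,
        smul_smul, add_smul, add_smul]
      abel
    rw [hEdef, hEH, expand, hc, zero_smul, add_zero]
  -- commutation of σ with P
  have hQP : vecMulVec (ψ 1) (star (ψ 1)) * P = 0 := by
    show vecMulVec (ψ 1) (star (ψ 1)) * vecMulVec (ψ 0) (star (ψ 0)) = 0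
    rw [vmv_mul_vmv, h10, zero_smul]
  have hPQ : P * vecMulVec (ψ 1) (star (ψ 1)) = 0 := by
    show vecMulVec (ψ 0) (star (ψ 0)) * vecMulVec (ψ 1) (star (ψ 1)) = 0
    rw [vmv_mul_vmv, h01, zero_smul]
  have hσP : σ * P = P * σ := by
    rw [hσ]
    rw [add_mul, add_mul, mul_add, mul_add, smul_mul_assoc, smul_mul_assoc,
      mul_smul_comm, mul_smul_comm, hQP, hPQ, hτ.eq]
  have hσE : σ * E = E * σ := by
    rw [hEdef, mul_add, add_mul, mul_one, one_mul, mul_smul_comm, smul_mul_assoc, hσP]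
  constructor
  · -- trace part
    rw [hVt, conjTranspose_mul]
    have assoc1 : Eᴴ * Vᴴ * H * (V * E) * σ = Eᴴ * ((Vᴴ * H * V) * (E * σ)) := by
      noncomm_ring
    rw [assoc1, ← hσE, ← mul_assoc, ← mul_assoc, Matrix.trace_mul_cycle,
      ← mul_assoc E, hEEH, one_mul]
  · -- vector part
    rw [hVt, conjTranspose_mul]
    have assoc2 : Eᴴ * Vᴴ * H * (V * E) = Eᴴ * ((Vᴴ * H * V) * E) := by noncomm_ring
    rw [assoc2]
    have hPv : P *ᵥ ψ 0 = ψ 0 := by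
      show vecMulVec (ψ 0) (star (ψ 0)) *ᵥ ψ 0 = ψ 0
      rw [vmv_mulVec, h00, one_smul]
    have hEv : E *ᵥ ψ 0 = z • ψ 0 := by
      rw [hEdef, Matrix.add_mulVec, Matrix.one_mulVec, Matrix.smul_mulVec, hPv]
      rw [sub_smul, one_smul]
      abel
    rw [← Matrix.mulVec_mulVec, ← Matrix.mulVec_mulVec, hEv, Matrix.mulVec_smul,
      Matrix.mulVec_smul, dotProduct_smul, smul_eq_mul]
    congr 1
    set w : Fin n → ℂ := (Vᴴ * H * V) *ᵥ ψ 0 with hw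
    rw [hEH, Matrix.add_mulVec, Matrix.one_mulVec, Matrix.smul_mulVec,
      dotProduct_add, dotProduct_smul]
    have : star (ψ 1) ⬝ᵥ (P *ᵥ w) = 0 := by
      show star (ψ 1) ⬝ᵥ (vecMulVec (ψ 0) (star (ψ 0)) *ᵥ w) = 0
      rw [vmv_mulVec, dotProduct_smul, h10, smul_eq_mul, mul_zero]
    rw [this, smul_zero, add_zero]
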